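/- Let σ > 0 and φ ∈ [−2π/3, 2π/3]. For real s with |s| < 2/√3 define Φ(s) = Σ_{n=1}^∞ (i^n/(n−1)!) · [Γ(3n/2 − 1)/Γ(n/2)] · 3^{1−n} · e^{iφ(1/2 − 3n/4)} · s^{n−1} (this series converges for |s| < 2/√3). Then ∫_{−2/√3}^{2/√3} Φ(s)·e^{−σ·s²} ds = Σ_{n=0}^∞ i·(−1)^n · [Γ(3n + 1/2)/(Γ(n + 1/2)·3^{2n}·(2n)!)] · e^{iφ(−3n/2 − 1/4)} · γ(n + 1/2, (4/3)σ) · σ^{−n − 1/2}, where the series on the right converges absolutely. -/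

import Mathlib

open Complex MeasureTheory

/-- Lower incomplete gamma function `γ(ν, x) = ∫_0^x t^{ν−1} e^{−t} dt`. -/
noncomputable def lowerGamma (ν x : ℝ) : ℝ := ∫ t in (0 : ℝ)..x, t ^ (ν - 1) * Real.exp (-t)

/-- `Φ(s) = Σ_{n=1}^∞ (i^n/(n−1)!)·[Γ(3n/2−1)/Γ(n/2)]·3^{1−n}·e^{iφ(1/2−3n/4)}·s^{n−1}`. -/
noncomputable def PhiFun (φ : ℝ) (s : ℝ) : ℂ :=
  ∑' n : ℕ,
    Complex.I ^ (n + 1) / (n.factorial : ℂ) *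
      ((Real.Gamma (3 * (n + 1) / 2 - 1) / Real.Gamma ((n + 1) / 2) : ℝ) : ℂ) *
      (3 : ℂ) ^ (1 - ((n : ℤ) + 1)) *
      Complex.exp (Complex.I * φ * (1 / 2 - 3 * (n + 1) / 4)) * (s : ℂ) ^ n

/-- Terms of the series on the right-hand side. -/
noncomputable def rhsTerm (σ φ : ℝ) (n : ℕ) : ℂ :=
  Complex.I * (-1 : ℂ) ^ n *
    ((Real.Gamma (3 * n + 1 / 2) /
        (Real.Gamma ((n : ℝ) + 1 / 2) * 3 ^ (2 * n) * (2 * n).factorial) : ℝ) : ℂ) *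
    Complex.exp (Complex.I * φ * (-(3 * n) / 2 - 1 / 4)) *
    ((lowerGamma ((n : ℝ) + 1 / 2) (4 / 3 * σ) * σ ^ (-(n : ℝ) - 1 / 2) : ℝ) : ℂ)

namespace Stmt11Aux

noncomputable def cst : ℝ := 2 / Real.sqrt 3

lemma cst_pos : 0 < cst := by
  unfold cst; positivity

lemma cst_sq : cst ^ 2 = 4 / 3 := by
  unfold cst
  rw [div_pow, Real.sq_sqrt (by norm_num : (0:ℝ) ≤ 3)]
  norm_num

/-- The coefficient of `s^n` in `PhiFun φ s`. -/
noncomputable def coefC (φ : ℝ) (n : ℕ) : ℂ :=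
  Complex.I ^ (n + 1) / (n.factorial : ℂ) *
      ((Real.Gamma (3 * (n + 1) / 2 - 1) / Real.Gamma ((n + 1) / 2) : ℝ) : ℂ) *
      (3 : ℂ) ^ (1 - ((n : ℤ) + 1)) *
      Complex.exp (Complex.I * φ * (1 / 2 - 3 * (n + 1) / 4))

lemma PhiFun_eq (φ s : ℝ) : PhiFun φ s = ∑' n : ℕ, coefC φ n * (s : ℂ) ^ n := rfl

/-- The absolute value of `coefC`. -/
noncomputable def Acoef (n : ℕ) : ℝ :=
  Real.Gamma (3 * (n + 1) / 2 - 1) / Real.Gamma ((n + 1) / 2) / 3 ^ n / n.factorial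

lemma Gamma1_pos (n : ℕ) : 0 < Real.Gamma (3 * ((n:ℝ) + 1) / 2 - 1) :=
  Real.Gamma_pos_of_pos (by
    have : (0:ℝ) ≤ (n:ℝ) := Nat.cast_nonneg n
    nlinarith)

lemma Gamma2_pos (n : ℕ) : 0 < Real.Gamma (((n:ℝ) + 1) / 2) :=
  Real.Gamma_pos_of_pos (by positivity)

lemma Acoef_pos (n : ℕ) : 0 < Acoef n := by
  unfold Acoef
  have h1 := Gamma1_pos n
  have h2 := Gamma2_pos n
  have h3 : (0:ℝ) < n.factorial := by positivity
  positivity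

lemma norm_coefC (φ : ℝ) (n : ℕ) : ‖coefC φ n‖ = Acoef n := by
  have h1 := Gamma1_pos n
  have h2 := Gamma2_pos n
  have hexp : ‖Complex.exp (Complex.I * φ * (1 / 2 - 3 * ((n:ℂ) + 1) / 4))‖ = 1 := by
    rw [Complex.norm_exp]
    have : (Complex.I * φ * (1 / 2 - 3 * ((n:ℂ) + 1) / 4)).re = 0 := by
      have : ((1:ℂ) / 2 - 3 * ((n:ℂ) + 1) / 4) = ((1 / 2 - 3 * ((n:ℝ) + 1) / 4 : ℝ) : ℂ) := by
        push_cast; ring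
      rw [this]
      simp [Complex.mul_re]
    rw [this, Real.exp_zero]
  unfold coefC Acoef
  rw [norm_mul, norm_mul, norm_mul, hexp, mul_one, norm_div, norm_pow, Complex.norm_I, one_pow,
    Complex.norm_natCast, norm_zpow]
  have h3 : ‖(3:ℂ)‖ = 3 := by
    simp
  rw [h3, Complex.norm_real, Real.norm_eq_abs,
    _root_.abs_of_nonneg (div_nonneg h1.le h2.le)]
  have hz : (1 - ((n : ℤ) + 1)) = -(n:ℤ) := by ring
  rw [hz, zpow_neg, zpow_natCast]
  ring

lemma Acoef_recur (n : ℕ) :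
    Acoef (n + 2) = Acoef n *
      ((3*(n:ℝ)+1) * (3*(n:ℝ)+3) * (3*(n:ℝ)+5)) / (36 * ((n:ℝ)+1)^2 * ((n:ℝ)+2)) := by
  have h1 := Gamma1_pos n
  have h2 := Gamma2_pos n
  have hn0 : (0:ℝ) ≤ (n:ℝ) := Nat.cast_nonneg n
  unfold Acoef
  push_cast
  have e1 : (3 * ((n:ℝ) + 2 + 1) / 2 - 1) = (3 * ((n:ℝ) + 1) / 2 - 1) + 1 + 1 + 1 := by ring
  have e2 : ((n:ℝ) + 2 + 1) / 2 = ((n:ℝ) + 1) / 2 + 1 := by ring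
  rw [e1, e2, Real.Gamma_add_one (by nlinarith), Real.Gamma_add_one (by nlinarith),
    Real.Gamma_add_one (by nlinarith), Real.Gamma_add_one (by positivity)]
  rw [Nat.factorial_succ, Nat.factorial_succ]
  push_cast
  have hf : (0:ℝ) < n.factorial := by positivity
  field_simp
  ring

noncomputable def bseq (n : ℕ) : ℝ := Acoef n * cst ^ n * Real.sqrt ((n:ℝ) + 1)

lemma key_poly (x : ℝ) (hx : 0 ≤ x) :
    ((3*x+1)*(3*x+3)*(3*x+5))^2 * (x+3) ≤ (x+1) * (27*(x+1)^2*(x+2))^2 := by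
  nlinarith [pow_nonneg hx 2, pow_nonneg hx 3, pow_nonneg hx 4, pow_nonneg hx 5,
    pow_nonneg hx 6, pow_nonneg hx 7, mul_nonneg hx hx]

lemma bseq_step (n : ℕ) : bseq (n + 2) ≤ bseq n := by
  have hA := Acoef_pos n
  have hx : (0:ℝ) ≤ (n:ℝ) := Nat.cast_nonneg n
  have hc := cst_pos
  set x : ℝ := (n:ℝ) with hxdef
  set K : ℝ := ((3*x+1)*(3*x+3)*(3*x+5)) / (27*(x+1)^2*(x+2)) with hK
  have hKnn : 0 ≤ K := by positivity
  have key : K * Real.sqrt (x + 3) ≤ Real.sqrt (x + 1) := by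
    have h1 : K * Real.sqrt (x+3) = Real.sqrt (K^2 * (x+3)) := by
      rw [Real.sqrt_mul (by positivity), Real.sqrt_sq hKnn]
    rw [h1]
    apply Real.sqrt_le_sqrt
    rw [hK, div_pow, div_mul_eq_mul_div, div_le_iff₀ (by positivity)]
    exact key_poly x hx
  have e : Acoef (n+2) * cst^(n+2) = Acoef n * cst^n * K := by
    have hp : cst^(n+2) = cst^n * (4/3) := by rw [pow_add, cst_sq]
    rw [Acoef_recur n, hp, hK]
    field_simp
    ring
  have e2 : bseq (n+2) = Acoef n * cst^n * (K * Real.sqrt (x + 3)) := by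
    unfold bseq
    push_cast
    rw [show ((x + 2) + 1 : ℝ) = x + 3 by ring, ← mul_assoc, e]
  have e3 : bseq n = Acoef n * cst^n * Real.sqrt (x + 1) := rfl
  rw [e2, e3]
  exact mul_le_mul_of_nonneg_left key (by positivity)

lemma bseq_le (n : ℕ) : bseq n ≤ max (bseq 0) (bseq 1) := by
  induction n using Nat.strong_induction_on with
  | _ n ih =>
    match n with
    | 0 => exact le_max_left _ _
    | 1 => exact le_max_right _ _
    | (n + 2) => exact (bseq_step n).trans (ih n (by omega))

noncomputable def Bseq (n : ℕ) : ℝ := Acoef n * cst ^ n / ((n:ℝ) + 1)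

lemma Bseq_nonneg (n : ℕ) : 0 ≤ Bseq n := by
  have := Acoef_pos n
  have := cst_pos
  unfold Bseq; positivity

lemma summable_w : Summable (fun n : ℕ => (((n:ℝ)+1) * Real.sqrt ((n:ℝ)+1))⁻¹) := by
  have h0 := Real.summable_nat_rpow_inv.2 (by norm_num : (1:ℝ) < 3/2)
  have h1 : Summable (fun n : ℕ => (((n:ℝ)+1) ^ (3/2 : ℝ))⁻¹) := by
    have := (summable_nat_add_iff (f := fun n : ℕ => (((n:ℝ)) ^ (3/2 : ℝ))⁻¹) 1).2 h0
    refine this.congr fun n => ?_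
    push_cast
    ring_nf
  refine h1.congr fun n => ?_
  congr 1
  rw [show (3/2:ℝ) = 1 + 1/2 by norm_num, Real.rpow_add (by positivity), Real.rpow_one,
    ← Real.sqrt_eq_rpow]

lemma summable_Bseq : Summable Bseq := by
  set C := max (bseq 0) (bseq 1) with hC
  have hle : ∀ n : ℕ, Bseq n ≤ C * ((((n:ℝ)+1) * Real.sqrt ((n:ℝ)+1))⁻¹) := by
    intro n
    have hb := bseq_le n
    have hpos : (0:ℝ) < (((n:ℝ)+1) * Real.sqrt ((n:ℝ)+1)) := by positivity
    have e : Bseq n = bseq n * ((((n:ℝ)+1) * Real.sqrt ((n:ℝ)+1))⁻¹) := by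
      unfold Bseq bseq
      rw [eq_comm, mul_comm ((n:ℝ)+1), mul_inv, ← mul_assoc, mul_assoc _ _ ((Real.sqrt _)⁻¹),
        mul_inv_cancel₀ (by positivity : Real.sqrt ((n:ℝ)+1) ≠ 0), mul_one]
      ring
    rw [e]
    exact mul_le_mul_of_nonneg_right hb (by positivity)
  exact Summable.of_nonneg_of_le Bseq_nonneg hle (summable_w.mul_left C)


/-! ### Integral computations -/

noncomputable def gC (σ φ : ℝ) (n : ℕ) (s : ℝ) : ℂ :=
  coefC φ n * ((s ^ n * Real.exp (-σ * s ^ 2) : ℝ) : ℂ)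

lemma gC_eq (σ φ : ℝ) (n : ℕ) (s : ℝ) :
    gC σ φ n s = coefC φ n * (s : ℂ) ^ n * ((Real.exp (-σ * s ^ 2) : ℝ) : ℂ) := by
  unfold gC; push_cast; ring

lemma continuous_gC (σ φ : ℝ) (n : ℕ) : Continuous (gC σ φ n) := by
  unfold gC
  exact continuous_const.mul (Complex.continuous_ofReal.comp
    ((continuous_pow n).mul (Real.continuous_exp.comp ((continuous_const (y := σ)).neg.mul (continuous_pow 2)))))

lemma norm_gC (σ φ : ℝ) (n : ℕ) (s : ℝ) :
    ‖gC σ φ n s‖ = Acoef n * (|s| ^ n * Real.exp (-σ * s ^ 2)) := by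
  unfold gC
  rw [norm_mul, norm_coefC, Complex.norm_real, Real.norm_eq_abs, _root_.abs_mul,
    _root_.abs_pow, _root_.abs_of_pos (Real.exp_pos _)]

lemma integral_comp_neg' {E : Type*} [NormedAddCommGroup E] [NormedSpace ℝ E]
    (g : ℝ → E) (c : ℝ) :
    ∫ x in (-c)..(0:ℝ), g x = ∫ x in (0:ℝ)..c, g (-x) := by
  have h := intervalIntegral.integral_comp_neg (a := (0:ℝ)) (b := c) g
  rw [neg_zero] at h
  exact h.symm

lemma abs_pow_integral (n : ℕ) {c : ℝ} (hc : 0 ≤ c) :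
    ∫ s in (-c)..c, |s| ^ n = 2 * c ^ (n + 1) / (n + 1) := by
  have hint : ∀ a b : ℝ, IntervalIntegrable (fun s : ℝ => |s| ^ n) volume a b := fun a b =>
    ((_root_.continuous_abs.pow n).intervalIntegrable a b)
  have h1 : ∫ s in (0:ℝ)..c, |s| ^ n = c ^ (n + 1) / (n + 1) := by
    have he : Set.EqOn (fun s : ℝ => |s| ^ n) (fun s : ℝ => s ^ n) (Set.uIcc (0:ℝ) c) := by
      intro s hs
      rw [Set.uIcc_of_le hc] at hs
      simp only
      rw [_root_.abs_of_nonneg hs.1]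
    rw [intervalIntegral.integral_congr he, integral_pow]
    rw [zero_pow (Nat.succ_ne_zero n)]
    push_cast; ring
  have h2 : ∫ s in (-c)..(0:ℝ), |s| ^ n = c ^ (n + 1) / (n + 1) := by
    rw [integral_comp_neg' (fun s : ℝ => |s| ^ n) c]
    simp only [abs_neg]
    exact h1
  rw [← intervalIntegral.integral_add_adjacent_intervals (hint (-c) 0) (hint 0 c), h1, h2]
  ring

lemma int_odd (σ : ℝ) (m : ℕ) (c : ℝ) :
    ∫ s in (-c)..c, s ^ (2*m+1) * Real.exp (-σ * s ^ 2) = 0 := by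
  have hcont : Continuous (fun s : ℝ => s ^ (2*m+1) * Real.exp (-σ * s ^ 2)) :=
    (continuous_pow _).mul (Real.continuous_exp.comp ((continuous_const (y := σ)).neg.mul (continuous_pow 2)))
  rw [← intervalIntegral.integral_add_adjacent_intervals
    (hcont.intervalIntegrable (-c) 0) (hcont.intervalIntegrable 0 c)]
  rw [integral_comp_neg' (fun s : ℝ => s ^ (2*m+1) * Real.exp (-σ * s ^ 2)) c]
  have : ∀ x : ℝ, (-x) ^ (2*m+1) * Real.exp (-σ * (-x) ^ 2)
      = -(x ^ (2*m+1) * Real.exp (-σ * x ^ 2)) := by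
    intro x
    rw [Odd.neg_pow ⟨m, by ring⟩, neg_sq]
    ring
  simp only [this]
  rw [intervalIntegral.integral_neg]
  ring

lemma int_even (σ : ℝ) (m : ℕ) (c : ℝ) :
    ∫ s in (-c)..c, s ^ (2*m) * Real.exp (-σ * s ^ 2)
      = 2 * ∫ s in (0:ℝ)..c, s ^ (2*m) * Real.exp (-σ * s ^ 2) := by
  have hcont : Continuous (fun s : ℝ => s ^ (2*m) * Real.exp (-σ * s ^ 2)) :=
    (continuous_pow _).mul (Real.continuous_exp.comp ((continuous_const (y := σ)).neg.mul (continuous_pow 2)))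
  rw [← intervalIntegral.integral_add_adjacent_intervals
    (hcont.intervalIntegrable (-c) 0) (hcont.intervalIntegrable 0 c)]
  rw [integral_comp_neg' (fun s : ℝ => s ^ (2*m) * Real.exp (-σ * s ^ 2)) c]
  have : ∀ x : ℝ, (-x) ^ (2*m) * Real.exp (-σ * (-x) ^ 2)
      = x ^ (2*m) * Real.exp (-σ * x ^ 2) := by
    intro x
    rw [Even.neg_pow ⟨m, by ring⟩, neg_sq]
  simp only [this]
  ring

lemma lowerGamma_eq {σ : ℝ} (hσ : 0 < σ) (m : ℕ) :
    lowerGamma ((m:ℝ) + 1/2) (σ * cst ^ 2)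
      = 2 * σ ^ ((m:ℝ) + 1/2) * ∫ s in (0:ℝ)..cst, s ^ (2*m) * Real.exp (-σ * s ^ 2) := by
  set ν : ℝ := (m:ℝ) + 1/2 with hν
  have hm0 : (0:ℝ) ≤ (m:ℝ) := Nat.cast_nonneg m
  have hν1 : (-1:ℝ) < ν - 1 := by rw [hν]; linarith
  set h : ℝ → ℝ := fun t => t ^ (ν - 1) * Real.exp (-t) with hh
  have hint : ∀ y : ℝ, IntervalIntegrable h volume 0 y := fun y =>
    (intervalIntegral.intervalIntegrable_rpow' hν1).mul_continuousOn
      (Real.continuous_exp.comp continuous_neg).continuousOn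
  set G : ℝ → ℝ := fun y => ∫ t in (0:ℝ)..y, h t with hG
  set q : ℝ → ℝ := fun s => σ * s ^ 2 with hq
  have hc0 := cst_pos
  have hX : 0 < σ * cst ^ 2 := by positivity
  have hhcont : ContinuousOn h (Set.Ioi (0:ℝ)) := by
    intro t ht
    exact ((Real.continuousAt_rpow_const t (ν - 1) (Or.inl (ne_of_gt ht))).mul
      ((Real.continuous_exp.comp continuous_neg).continuousAt)).continuousWithinAt
  have hGcont : ContinuousOn G (Set.Icc 0 (σ * cst ^ 2)) := by
    have h2 := intervalIntegral.continuousOn_primitive_interval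
      (a := (0:ℝ)) (b := σ * cst ^ 2) (μ := volume) (f := h) ?_
    · rwa [Set.uIcc_of_le hX.le] at h2
    · rw [Set.uIcc_of_le hX.le]
      exact (intervalIntegrable_iff_integrableOn_Icc_of_le hX.le).1 (hint _)
  have hqcont : Continuous q := continuous_const.mul (continuous_pow 2)
  have hFcont : ContinuousOn (fun s => G (q s)) (Set.Icc 0 cst) := by
    apply hGcont.comp hqcont.continuousOn
    intro s hs
    have hs1 := hs.1
    have hs2 := hs.2
    constructor
    · simp only [hq]; positivity
    · simp only [hq]
      have : s ^ 2 ≤ cst ^ 2 := by nlinarith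
      nlinarith
  have hderiv : ∀ x ∈ Set.Ioo (0:ℝ) cst,
      HasDerivWithinAt (fun s => G (q s))
        (2 * σ ^ ν * (x ^ (2*m) * Real.exp (-σ * x ^ 2))) (Set.Ioi x) x := by
    intro x hx
    have hx0 : 0 < x := hx.1
    have hy0 : 0 < q x := by simp only [hq]; positivity
    have hGd : HasDerivAt G (h (q x)) (q x) := by
      apply intervalIntegral.integral_hasDerivAt_right (hint (q x))
      · exact ContinuousOn.stronglyMeasurableAtFilter isOpen_Ioi hhcont (q x) hy0
      · exact ((Real.continuousAt_rpow_const _ _ (Or.inl hy0.ne')).mul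
          ((Real.continuous_exp.comp continuous_neg).continuousAt))
    have hqd : HasDerivAt q (σ * (2 * x)) x := by
      simpa using (hasDerivAt_pow 2 x).const_mul σ
    have hcomp := hGd.comp x hqd
    have heq : h (q x) * (σ * (2 * x)) = 2 * σ ^ ν * (x ^ (2*m) * Real.exp (-σ * x ^ 2)) := by
      simp only [hh, hq]
      have e1 : (σ * x ^ 2) ^ (ν - 1) = σ ^ (ν - 1) * (x ^ 2) ^ (ν - 1) :=
        Real.mul_rpow hσ.le (by positivity)
      have e2 : ((x:ℝ) ^ 2) ^ (ν - 1) = x ^ (2 * (ν - 1)) := by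
        rw [← Real.rpow_natCast x 2, ← Real.rpow_mul hx0.le]
        norm_num
      have e3 : x ^ (2 * (ν - 1) : ℝ) * x = x ^ (2 * m : ℕ) := by
        nth_rewrite 2 [← Real.rpow_one x]
        rw [← Real.rpow_add hx0, ← Real.rpow_natCast x (2 * m)]
        congr 1
        push_cast [hν]
        ring
      have e4 : σ ^ (ν - 1 : ℝ) * σ = σ ^ ν := by
        nth_rewrite 2 [← Real.rpow_one σ]
        rw [← Real.rpow_add hσ]
        congr 1
        ring
      have e5 : Real.exp (-(σ * x ^ 2)) = Real.exp (-σ * x ^ 2) := by ring_nf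
      rw [e1, e2, e5]
      calc σ ^ (ν - 1) * x ^ (2 * (ν - 1) : ℝ) * Real.exp (-σ * x ^ 2) * (σ * (2 * x))
          = 2 * (σ ^ (ν - 1 : ℝ) * σ) * ((x ^ (2 * (ν - 1) : ℝ) * x) * Real.exp (-σ * x ^ 2)) := by
            ring
        _ = 2 * σ ^ ν * (x ^ (2*m) * Real.exp (-σ * x ^ 2)) := by rw [e3, e4]
    rw [← heq]
    exact hcomp.hasDerivWithinAt
  have hfint : IntervalIntegrable
      (fun x : ℝ => 2 * σ ^ ν * (x ^ (2*m) * Real.exp (-σ * x ^ 2))) volume 0 cst := by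
    apply Continuous.intervalIntegrable
    exact continuous_const.mul ((continuous_pow _).mul
      (Real.continuous_exp.comp ((continuous_const (y := σ)).neg.mul (continuous_pow 2))))
  have key := intervalIntegral.integral_eq_sub_of_hasDeriv_right_of_le cst_pos.le
    hFcont hderiv hfint
  have hF0 : G (q 0) = 0 := by
    have : q 0 = 0 := by simp [hq]
    rw [this]
    simp only [hG]
    exact intervalIntegral.integral_same
  have hFc : G (q cst) = lowerGamma ν (σ * cst ^ 2) := by
    simp only [hq, hG, hh]
    rfl
  rw [hF0, sub_zero, hFc] at key
  rw [← key, intervalIntegral.integral_const_mul]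

lemma int_gC_odd (σ φ : ℝ) (m : ℕ) :
    ∫ s in (-cst)..cst, gC σ φ (2*m+1) s = 0 := by
  simp only [gC]
  rw [intervalIntegral.integral_const_mul, intervalIntegral.integral_ofReal, int_odd σ m cst]
  simp

lemma int_gC_even {σ : ℝ} (hσ : 0 < σ) (φ : ℝ) (m : ℕ) :
    ∫ s in (-cst)..cst, gC σ φ (2*m) s = rhsTerm σ φ m := by
  simp only [gC]
  rw [intervalIntegral.integral_const_mul, intervalIntegral.integral_ofReal, int_even σ m cst]
  have hg : (2:ℝ) * ∫ s in (0:ℝ)..cst, s^(2*m) * Real.exp (-σ*s^2)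
      = lowerGamma ((m:ℝ)+1/2) (4/3*σ) * σ ^ (-(m:ℝ) - 1/2) := by
    have h1 := lowerGamma_eq hσ m
    have h2 : σ * cst ^ 2 = 4/3*σ := by rw [cst_sq]; ring
    rw [h2] at h1
    have hp : (0:ℝ) < σ ^ ((m:ℝ)+1/2) := Real.rpow_pos_of_pos hσ _
    have h3 : σ ^ (-(m:ℝ) - 1/2) = (σ ^ ((m:ℝ)+1/2))⁻¹ := by
      rw [show (-(m:ℝ) - 1/2) = -((m:ℝ)+1/2) by ring, Real.rpow_neg hσ.le]
    rw [h1, h3]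
    field_simp
  rw [hg]
  -- coefficient algebra
  rw [coefC, rhsTerm]
  have hI : Complex.I ^ (2*m+1) = Complex.I * (-1:ℂ)^m := by
    rw [pow_succ, pow_mul, Complex.I_sq]; ring
  rw [hI]
  have hzpow : (3:ℂ) ^ ((1 : ℤ) - (((2*m : ℕ) : ℤ) + 1)) = ((3:ℂ)^(2*m))⁻¹ := by
    rw [show ((1:ℤ) - (((2*m:ℕ):ℤ)+1)) = -((2*m:ℕ):ℤ) by push_cast; ring, zpow_neg, zpow_natCast]
  rw [hzpow]
  have hGamma1 : Real.Gamma (3 * (((2*m:ℕ):ℝ) + 1) / 2 - 1) = Real.Gamma (3*(m:ℝ) + 1/2) := by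
    congr 1; push_cast; ring
  have hGamma2 : Real.Gamma ((((2*m:ℕ):ℝ) + 1)/2) = Real.Gamma ((m:ℝ) + 1/2) := by
    congr 1; push_cast; ring
  rw [hGamma1, hGamma2]
  have hexp : (Complex.I * (φ:ℂ) * (1 / 2 - 3 * (((2*m:ℕ):ℂ) + 1) / 4))
      = Complex.I * (φ:ℂ) * (-(3 * (m:ℂ)) / 2 - 1/4) := by push_cast; ring
  rw [hexp]
  push_cast
  ring

section Assembly

variable {σ : ℝ} (φ : ℝ)

lemma main_assembly (hσ : 0 < σ) (φ : ℝ) :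
    (Summable fun n : ℕ => ‖rhsTerm σ φ n‖) ∧
    (∫ s in (-cst)..cst, PhiFun φ s * ((Real.exp (-σ * s ^ 2) : ℝ) : ℂ))
      = ∑' n : ℕ, rhsTerm σ φ n := by
  have hc := cst_pos
  have hle : -cst ≤ cst := by linarith
  set T : ℕ → ℂ := fun n => ∫ s in (-cst)..cst, gC σ φ n s with hT
  have hInt : ∀ n, IntegrableOn (gC σ φ n) (Set.Ioc (-cst) cst) volume := fun n =>
    (continuous_gC σ φ n).integrableOn_Ioc
  have hVle : ∀ n, (∫ s in Set.Ioc (-cst) cst, ‖gC σ φ n s‖) ≤ 2 * cst * Bseq n := by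
    intro n
    have h1 : (∫ s in Set.Ioc (-cst) cst, ‖gC σ φ n s‖)
        = ∫ s in (-cst)..cst, ‖gC σ φ n s‖ := (intervalIntegral.integral_of_le hle).symm
    rw [h1]
    have hint1 : IntervalIntegrable (fun s => ‖gC σ φ n s‖) volume (-cst) cst :=
      ((continuous_gC σ φ n).norm).intervalIntegrable _ _
    have hint2 : IntervalIntegrable (fun s : ℝ => Acoef n * |s|^n) volume (-cst) cst :=
      (continuous_const.mul (_root_.continuous_abs.pow n)).intervalIntegrable _ _
    have h2 : ∫ s in (-cst)..cst, ‖gC σ φ n s‖ ≤ ∫ s in (-cst)..cst, Acoef n * |s|^n := by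
      apply intervalIntegral.integral_mono_on hle hint1 hint2
      intro s hs
      rw [norm_gC]
      have he1 : Real.exp (-σ*s^2) ≤ 1 := by
        rw [← Real.exp_zero]
        apply Real.exp_le_exp.mpr
        nlinarith [sq_nonneg s]
      have h0 : (0:ℝ) ≤ |s|^n := pow_nonneg (abs_nonneg s) n
      have step := mul_le_mul_of_nonneg_left (mul_le_mul_of_nonneg_left he1 h0) (Acoef_pos n).le
      simpa using step
    have h3 : ∫ s in (-cst)..cst, Acoef n * |s|^n = Acoef n * (2*cst^(n+1)/((n:ℝ)+1)) := by
      rw [intervalIntegral.integral_const_mul, abs_pow_integral n hc.le]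
    refine h2.trans (le_of_eq ?_)
    rw [h3]
    unfold Bseq
    rw [pow_succ]
    ring
  have hVsum : Summable (fun n => ∫ s in Set.Ioc (-cst) cst, ‖gC σ φ n s‖) :=
    Summable.of_nonneg_of_le (fun n => integral_nonneg (fun s => norm_nonneg _)) hVle
      (summable_Bseq.mul_left (2*cst))
  have hkey := MeasureTheory.integral_tsum_of_summable_integral_norm
    (μ := volume.restrict (Set.Ioc (-cst) cst)) (F := fun n => gC σ φ n) hInt hVsum
  have hpt : ∀ s : ℝ, (∑' n, gC σ φ n s) = PhiFun φ s * ((Real.exp (-σ*s^2) : ℝ) : ℂ) := by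
    intro s
    rw [PhiFun_eq, ← tsum_mul_right]
    exact tsum_congr (fun n => gC_eq σ φ n s)
  have hTeq : ∀ n, (∫ s in Set.Ioc (-cst) cst, gC σ φ n s) = T n := fun n =>
    (intervalIntegral.integral_of_le hle).symm
  have hTnorm : ∀ n, ‖T n‖ ≤ ∫ s in Set.Ioc (-cst) cst, ‖gC σ φ n s‖ := by
    intro n
    rw [← hTeq n]
    exact MeasureTheory.norm_integral_le_integral_norm _
  have hTsummable : Summable T :=
    Summable.of_norm (Summable.of_nonneg_of_le (fun n => norm_nonneg _) hTnorm hVsum)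
  have hinj2 : Function.Injective (fun k : ℕ => 2*k) := fun a b h => by
    have h' : 2*a = 2*b := h; omega
  have hinj2' : Function.Injective (fun k : ℕ => 2*k+1) := fun a b h => by
    have h' : 2*a+1 = 2*b+1 := h; omega
  have heven : ∀ m : ℕ, T (2*m) = rhsTerm σ φ m := fun m => int_gC_even hσ φ m
  have hodd : ∀ m : ℕ, T (2*m+1) = 0 := fun m => int_gC_odd σ φ m
  constructor
  · have hVsum2 : Summable (fun m : ℕ => ∫ s in Set.Ioc (-cst) cst, ‖gC σ φ (2*m) s‖) := by
      have h' := hVsum.comp_injective hinj2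
      exact h'
    exact Summable.of_nonneg_of_le (fun m => norm_nonneg _)
      (fun m => by rw [← heven m]; exact hTnorm (2*m)) hVsum2
  · have hsplit := tsum_even_add_odd (hTsummable.comp_injective hinj2)
      (hTsummable.comp_injective hinj2')
    have hL : (∫ s in (-cst)..cst, PhiFun φ s * ((Real.exp (-σ * s ^ 2) : ℝ) : ℂ))
        = ∑' n, T n := by
      rw [intervalIntegral.integral_of_le hle]
      have : ∀ s : ℝ, PhiFun φ s * ((Real.exp (-σ*s^2) : ℝ) : ℂ) = ∑' n, gC σ φ n s :=
        fun s => (hpt s).symm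
      rw [MeasureTheory.integral_congr_ae (Filter.Eventually.of_forall (fun s => this s))]
      rw [← hkey]
      exact tsum_congr hTeq
    rw [hL, ← hsplit]
    have h1 : (∑' k : ℕ, T (2*k)) = ∑' k, rhsTerm σ φ k := tsum_congr heven
    have h2 : (∑' k : ℕ, T (2*k+1)) = 0 := by
      rw [tsum_congr hodd]; exact tsum_zero
    rw [h1, h2, add_zero]

end Assembly

end Stmt11Aux

theorem stmt11 (σ : ℝ) (hσ : 0 < σ) (φ : ℝ) (hφ : φ ∈ Set.Icc (-(2 * Real.pi / 3)) (2 * Real.pi / 3)) :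
    (Summable fun n : ℕ => ‖rhsTerm σ φ n‖) ∧
    (∫ s in (-(2 / Real.sqrt 3))..(2 / Real.sqrt 3),
        PhiFun φ s * ((Real.exp (-σ * s ^ 2) : ℝ) : ℂ)) = ∑' n : ℕ, rhsTerm σ φ n :=
  Stmt11Aux.main_assembly hσ φ
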